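/- arXiv:math/0601012 — 2 statements merged into one kernel-verified Lean document; each statement's English description precedes it below -/
import Mathlib

section
/- Let N ≥ 1 and t be integers, let 1̄ denote the class of 1 in ℤ/Nℤ, and let m be a natural number. Then ∏_{k=0}^{m−1} ω_t(1̄, k̄, 1̄) = exp( 2πi·t·⌊m/N⌋ / N ), where k̄ denotes the class of k in ℤ/Nℤ and ⌊m/N⌋ is the integer part of m/N. -/
/-!
Statement 5: For `N ≥ 1`, `t ∈ ℤ` and `m ∈ ℕ`,
`∏_{k=0}^{m−1} ω_t(1̄, k̄, 1̄) = exp(2πi·t·⌊m/N⌋/N)`.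
-/

/-- The standard 3-cochain `ω_t` on `ℤ/Nℤ` with values in `ℂ`. -/
noncomputable def omegaCocycle (N : ℕ) (t : ℤ) (a b c : ZMod N) : ℂ :=
  Complex.exp ((2 * (Real.pi : ℂ) * Complex.I * (t : ℂ) / ((N : ℂ) ^ 2)) *
    ((a.val : ℂ) * ((((b.val : ℤ) + (c.val : ℤ) - ((b + c).val : ℤ)) : ℤ) : ℂ)))

lemma term_int (N k : ℕ) (hN : 2 ≤ N) :
    (((k : ZMod N).val : ℤ) + (((1 : ZMod N)).val : ℤ) - ((((k : ZMod N) + 1).val : ℤ)))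
      = if (k + 1) % N = 0 then (N : ℤ) else 0 := by
  haveI : NeZero N := ⟨by omega⟩
  haveI : Fact (1 < N) := ⟨by omega⟩
  have h1 : (1 : ZMod N).val = 1 := ZMod.val_one N
  have hk : (k : ZMod N).val = k % N := ZMod.val_natCast N k
  have hk1 : ((k : ZMod N) + 1).val = (k + 1) % N := by
    have h : (k : ZMod N) + 1 = ((k + 1 : ℕ) : ZMod N) := by push_cast; ring
    rw [h, ZMod.val_natCast]
  rw [h1, hk, hk1]
  have h2 : (k + 1) % N = (k % N + 1) % N := by
    conv_lhs => rw [Nat.add_mod]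
    rw [Nat.mod_eq_of_lt (show 1 < N by omega)]
  have hr : k % N < N := Nat.mod_lt _ (by omega)
  rw [h2]
  by_cases h3 : k % N + 1 = N
  · rw [h3, Nat.mod_self, if_pos rfl]
    omega
  · rw [Nat.mod_eq_of_lt (show k % N + 1 < N by omega),
      if_neg (show ¬(k % N + 1 = 0) by omega)]
    omega

lemma sum_d (N m : ℕ) (hN : 1 ≤ N) :
    ∑ k ∈ Finset.range m, (if (k + 1) % N = 0 then (N : ℤ) else 0)
      = (N : ℤ) * ((m / N : ℕ) : ℤ) := by
  induction m with
  | zero => simp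
  | succ n ih =>
    rw [Finset.sum_range_succ, ih, Nat.succ_div]
    have hdvd : N ∣ n + 1 ↔ (n + 1) % N = 0 := Nat.dvd_iff_mod_eq_zero
    by_cases h : (n + 1) % N = 0
    · rw [if_pos h, if_pos (hdvd.mpr h)]
      push_cast; ring
    · rw [if_neg h, if_neg (fun hc => h (hdvd.mp hc))]
      push_cast; ring

theorem omegaCocycle_prod (N : ℕ) (hN : 1 ≤ N) (t : ℤ) (m : ℕ) :
    ∏ k ∈ Finset.range m, omegaCocycle N t 1 (k : ZMod N) 1 =
      Complex.exp (2 * (Real.pi : ℂ) * Complex.I * (t : ℂ) * ((m / N : ℕ) : ℂ) / (N : ℂ)) := by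
  rcases eq_or_lt_of_le hN with h1 | h2
  · -- N = 1
    subst h1
    have hterm : ∀ k : ℕ, omegaCocycle 1 t 1 (k : ZMod 1) 1 = 1 := by
      intro k
      unfold omegaCocycle
      have : ((1 : ZMod 1)).val = 0 := rfl
      simp [this]
    simp only [hterm, Finset.prod_const_one]
    rw [Nat.div_one]
    have : 2 * (Real.pi : ℂ) * Complex.I * (t : ℂ) * ((m : ℕ) : ℂ) / ((1 : ℕ) : ℂ)
        = ((t * m : ℤ) : ℂ) * (2 * Real.pi * Complex.I) := by push_cast; ring
    rw [this, Complex.exp_int_mul_two_pi_mul_I]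
  · -- N ≥ 2
    have hN2 : 2 ≤ N := h2
    haveI : NeZero N := ⟨by omega⟩
    haveI : Fact (1 < N) := ⟨by omega⟩
    have hNc : (N : ℂ) ≠ 0 := Nat.cast_ne_zero.mpr (by omega)
    have hone : ((1 : ZMod N)).val = 1 := ZMod.val_one N
    set C : ℂ := 2 * (Real.pi : ℂ) * Complex.I * (t : ℂ) / ((N : ℂ) ^ 2) with hC
    have hterm : ∀ k : ℕ, omegaCocycle N t 1 (k : ZMod N) 1
        = Complex.exp (C * ((if (k + 1) % N = 0 then (N : ℤ) else 0 : ℤ) : ℂ)) := by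
      intro k
      unfold omegaCocycle
      rw [term_int N k hN2, hone]
      congr 1
      push_cast
      ring
    simp only [hterm]
    rw [← Complex.exp_sum]
    congr 1
    rw [← Finset.mul_sum, ← Int.cast_sum, sum_d N m hN, hC]
    have hq : ((((N : ℤ) * ((m / N : ℕ) : ℤ)) : ℤ) : ℂ)
        = (N : ℂ) * ((m / N : ℕ) : ℂ) := by norm_cast
    rw [hq]
    have hsq : ((N : ℂ)) ^ 2 ≠ 0 := pow_ne_zero _ hNc
    rw [div_mul_eq_mul_div, div_eq_div_iff hsq hNc]
    ring
end

section
/- Let p be a prime number, V a finite-dimensional complex vector space, and f : V → V a ℂ-linear map with f^p = id. If the trace of f is an integer, i.e. Tr(f) = (m : ℂ) for some integer m, then m ≡ dim_ℂ V (mod p). -/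
/-!
Statement 8: Let `p` be a prime, `V` a finite-dimensional complex vector space and
`f : V → V` a `ℂ`-linear map with `f^p = id`. If `Tr(f)` is an integer `m`, then
`m ≡ dim_ℂ V (mod p)`.
-/

theorem trace_int_congr_finrank (p : ℕ) (hp : p.Prime)
    (V : Type*) [AddCommGroup V] [Module ℂ V] [FiniteDimensional ℂ V]
    (f : Module.End ℂ V) (hf : f ^ p = 1)
    (m : ℤ) (hm : LinearMap.trace ℂ V f = (m : ℂ)) :
    m ≡ (Module.finrank ℂ V : ℤ) [ZMOD (p : ℤ)] := by
  classical
  haveI : Fact p.Prime := ⟨hp⟩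
  haveI : NeZero p := ⟨hp.ne_zero⟩
  set E := f.eigenspace with hE
  -- `f` is semisimple
  have hsep : Polynomial.Separable (Polynomial.X ^ p - Polynomial.C (1 : ℂ)) :=
    Polynomial.separable_X_pow_sub_C 1 (by exact_mod_cast hp.ne_zero) one_ne_zero
  have haev : Polynomial.aeval f (Polynomial.X ^ p - Polynomial.C (1 : ℂ)) = 0 := by
    simp [hf]
  have hss : f.IsSemisimple :=
    Module.End.isSemisimple_of_squarefree_aeval_eq_zero hsep.squarefree haev
  -- eigenspaces span and are independent
  have htop : ⨆ μ, E μ = ⊤ := by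
    have h := Module.End.iSup_maxGenEigenspace_eq_top f
    simpa [hE, funext fun μ ↦
      hss.isFinitelySemisimple.maxGenEigenspace_eq_eigenspace μ] using h
  have hindep : iSupIndep E := f.eigenspaces_iSupIndep
  have hInt : DirectSum.IsInternal E :=
    DirectSum.isInternal_submodule_of_iSupIndep_of_iSup_eq_top hindep htop
  have hfin : {μ : ℂ | E μ ≠ ⊥}.Finite :=
    WellFoundedGT.finite_ne_bot_of_iSupIndep hindep
  set s := hfin.toFinset with hs
  -- `f` maps each eigenspace to itself
  have hmap : ∀ μ : ℂ, Set.MapsTo f (E μ) (E μ) := by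
    intro μ x hx
    have hx' : f x = μ • x := Module.End.mem_eigenspace_iff.mp hx
    have : f (f x) = μ • f x := by rw [hx', map_smul, hx']
    exact Module.End.mem_eigenspace_iff.mpr this
  have hmap1 : ∀ μ : ℂ, Set.MapsTo (1 : Module.End ℂ V) (E μ) (E μ) :=
    fun μ x hx ↦ hx
  set d : ℂ → ℕ := fun μ ↦ Module.finrank ℂ (E μ) with hd
  -- trace of the restriction of `f`
  have hres : ∀ μ : ℂ, LinearMap.trace ℂ (E μ) (f.restrict (hmap μ)) = μ * d μ := by
    intro μ
    have : f.restrict (hmap μ) = μ • (1 : Module.End ℂ (E μ)) := by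
      ext x
      exact Module.End.mem_eigenspace_iff.mp x.2
    rw [this, map_smul, LinearMap.trace_one]
    simp [hd]
  have h1 : LinearMap.trace ℂ V f = ∑ μ ∈ s, μ * d μ := by
    rw [LinearMap.trace_eq_sum_trace_restrict' hInt hfin hmap]
    exact Finset.sum_congr rfl fun μ _ ↦ hres μ
  -- dimension count
  have h2 : (Module.finrank ℂ V : ℂ) = ∑ μ ∈ s, (d μ : ℂ) := by
    have := LinearMap.trace_eq_sum_trace_restrict' hInt hfin hmap1
    rw [LinearMap.trace_one] at this
    rw [this]
    refine Finset.sum_congr rfl fun μ _ ↦ ?_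
    have : (1 : Module.End ℂ V).restrict (hmap1 μ) = (1 : Module.End ℂ (E μ)) := by
      ext x; rfl
    rw [this, LinearMap.trace_one]
  have h2' : Module.finrank ℂ V = ∑ μ ∈ s, d μ := by
    have : ((Module.finrank ℂ V : ℕ) : ℂ) = ((∑ μ ∈ s, d μ : ℕ) : ℂ) := by
      push_cast; exact h2
    exact_mod_cast this
  -- all eigenvalues are p-th roots of unity
  have hμp : ∀ μ ∈ s, μ ^ p = 1 := by
    intro μ hμ
    have hne : E μ ≠ ⊥ := by simpa [hs] using hμ
    obtain ⟨v, hv, hv0⟩ := (Submodule.ne_bot_iff _).mp hne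
    have hev : f.HasEigenvector μ v := ⟨hv, hv0⟩
    have hpow : (f ^ p) v = μ ^ p • v := hev.pow_apply p
    rw [hf] at hpow
    have : (μ ^ p - 1) • v = 0 := by
      rw [sub_smul, one_smul, ← hpow]; simp
    rcases smul_eq_zero.mp this with h | h
    · exact sub_eq_zero.mp h
    · exact absurd h hv0
  -- primitive p-th root of unity
  set ζ : ℂ := Complex.exp (2 * Real.pi * Complex.I / p) with hζdef
  have hζ : IsPrimitiveRoot ζ p := Complex.isPrimitiveRoot_exp p hp.ne_zero
  -- choose exponents
  have hex : ∀ μ ∈ s, ∃ i, i < p ∧ ζ ^ i = μ := by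
    intro μ hμ
    obtain ⟨i, hi, hiμ⟩ := hζ.eq_pow_of_pow_eq_one (hμp μ hμ)
    exact ⟨i, hi, hiμ⟩
  set j : ℂ → ℕ := fun μ ↦ if h : ∃ i, i < p ∧ ζ ^ i = μ then h.choose else 0 with hj
  have hjμ : ∀ μ ∈ s, ζ ^ j μ = μ := by
    intro μ hμ
    have h := hex μ hμ
    simp only [hj, dif_pos h]
    exact h.choose_spec.2
  -- the integer polynomial
  set q : Polynomial ℤ :=
    (∑ μ ∈ s, Polynomial.C (d μ : ℤ) * Polynomial.X ^ j μ) - Polynomial.C m with hq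
  have haevq : Polynomial.aeval ζ q = 0 := by
    rw [hq]
    simp only [map_sub, map_sum, map_mul, map_pow, Polynomial.aeval_X, Polynomial.aeval_C, eq_intCast, map_intCast]
    have : ∑ μ ∈ s, ((d μ : ℤ) : ℂ) * ζ ^ j μ = ∑ μ ∈ s, μ * d μ := by
      refine Finset.sum_congr rfl fun μ hμ ↦ ?_
      rw [hjμ μ hμ]; push_cast; ring
    rw [this, ← h1, hm]
    simp
  have hdvd : Polynomial.cyclotomic p ℤ ∣ q := by
    rw [Polynomial.cyclotomic_eq_minpoly hζ hp.pos]
    exact minpoly.isIntegrallyClosed_dvd (hζ.isIntegral hp.pos) haevq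
  obtain ⟨r, hr⟩ := hdvd
  have heval : q.eval 1 = (p : ℤ) * r.eval 1 := by
    rw [hr, Polynomial.eval_mul, Polynomial.eval_one_cyclotomic_prime]
  have hq1 : q.eval 1 = (Module.finrank ℂ V : ℤ) - m := by
    rw [hq]
    simp only [Polynomial.eval_sub, Polynomial.eval_finset_sum, Polynomial.eval_mul,
      Polynomial.eval_pow, Polynomial.eval_X, Polynomial.eval_C, one_pow, mul_one]
    rw [h2']
    push_cast
    ring
  have : (p : ℤ) ∣ (Module.finrank ℂ V : ℤ) - m := ⟨r.eval 1, by rw [← heval, hq1]⟩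
  exact (Int.modEq_iff_dvd.mpr this)
end
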